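/- arXiv:1109.3853 — 3 statements merged into one kernel-verified Lean document; each statement's English description precedes it below -/
import Mathlib

section
/- Suppose the eigenvalues κ₁,...,κₙ of A(ξ) are distinct positive reals, ξ ≠ 0, κ > 0, γ ≠ 0. Then the matrix B(ξ) has a purely real eigenvalue if and only if some coupling function a_j(ξ) vanishes; in that case ±ω_j(ξ) = ±√κ_j(ξ) are eigenvalues of B(ξ). -/
open Matrix BigOperators

/-- The coefficient matrix B(ξ) of the thermo-elastic first order system, eq. (2.9):
diagonal ω₁,…,ωₙ,−ω₁,…,−ωₙ,iκs (s = |ξ|²), last column iγa_j, last row (iγ/2)a_j. -/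
noncomputable def Bmat (n : ℕ) (ω a : Fin n → ℝ) (γ κ s : ℝ) :
    Matrix (Fin (2 * n + 1)) (Fin (2 * n + 1)) ℂ := Matrix.of fun i j =>
  if hi : (i : ℕ) < n then
    if hj : (j : ℕ) < n then
      (if (i : ℕ) = (j : ℕ) then ((ω ⟨i, hi⟩ : ℝ) : ℂ) else 0)
    else if (j : ℕ) < 2 * n then 0
    else Complex.I * (γ : ℂ) * ((a ⟨i, hi⟩ : ℝ) : ℂ)
  else if hi2 : (i : ℕ) < 2 * n then
    if hj : (j : ℕ) < n then 0
    else if hj2 : (j : ℕ) < 2 * n then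
      (if (i : ℕ) = (j : ℕ) then -((ω ⟨(i : ℕ) - n, by omega⟩ : ℝ) : ℂ) else 0)
    else Complex.I * (γ : ℂ) * ((a ⟨(i : ℕ) - n, by omega⟩ : ℝ) : ℂ)
  else
    if hj : (j : ℕ) < n then Complex.I * (γ : ℂ) / 2 * ((a ⟨j, hj⟩ : ℝ) : ℂ)
    else if hj2 : (j : ℕ) < 2 * n then
      Complex.I * (γ : ℂ) / 2 * ((a ⟨(j : ℕ) - n, by omega⟩ : ℝ) : ℂ)
    else Complex.I * (κ : ℂ) * (s : ℂ)

lemma det_expand_row {ι : Type*} [Fintype ι] [DecidableEq ι] (M : Matrix ι ι ℂ) (j : ι) :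
    M.det = ∑ t, M j t * (M.updateRow j (Pi.single t 1)).det := by
  have h := congrFun (congrFun (Matrix.mul_adjugate M) j) j
  simp only [Matrix.mul_apply, Matrix.adjugate_apply, Matrix.smul_apply, Matrix.one_apply_eq,
    smul_eq_mul, mul_one] at h
  exact h.symm

lemma det_bordered {ι : Type*} [Fintype ι] [DecidableEq ι]
    (D c r : ι → ℂ) (d : ℂ) :
    (Matrix.fromBlocks (Matrix.diagonal D) (Matrix.of fun i (_ : Unit) => c i)
      (Matrix.of fun (_ : Unit) j => r j) (Matrix.of fun (_ : Unit) (_ : Unit) => d)).det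
    = d * ∏ i, D i - ∑ i, r i * c i * ∏ k ∈ Finset.univ.erase i, D k := by
  set M : Matrix (ι ⊕ Unit) (ι ⊕ Unit) ℂ :=
    Matrix.fromBlocks (Matrix.diagonal D) (Matrix.of fun i (_ : Unit) => c i)
      (Matrix.of fun (_ : Unit) j => r j) (Matrix.of fun (_ : Unit) (_ : Unit) => d) with hM
  rw [det_expand_row M (Sum.inr ()), Fintype.sum_sum_type]
  have hrow : ∀ t, M (Sum.inr ()) t = Sum.elim r (fun _ => d) t := by
    rintro (t | t) <;> simp [hM, Matrix.fromBlocks]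
  have h2 : (M.updateRow (Sum.inr ()) (Pi.single (Sum.inr ()) 1)).det = ∏ i, D i := by
    have he : M.updateRow (Sum.inr ()) (Pi.single (Sum.inr ()) 1) =
        Matrix.fromBlocks (Matrix.diagonal D) (Matrix.of fun i (_ : Unit) => c i)
          0 (Matrix.of fun (_ : Unit) (_ : Unit) => 1) := by
      ext (i | i) (j | j) <;>
        simp [hM, Matrix.updateRow_apply, Matrix.fromBlocks, Pi.single_apply]
    rw [he, Matrix.det_fromBlocks_zero₂₁]
    simp [Matrix.det_unique]
  have h1 : ∀ i : ι, (M.updateRow (Sum.inr ()) (Pi.single (Sum.inl i) 1)).det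
      = -(c i * ∏ k ∈ Finset.univ.erase i, D k) := by
    intro i
    set N := M.updateRow (Sum.inr ()) (Pi.single (Sum.inl i) 1) with hN
    rw [det_expand_row N (Sum.inl i), Fintype.sum_sum_type]
    have hNrow : ∀ t, N (Sum.inl i) t
        = Sum.elim (fun k => Matrix.diagonal D i k) (fun _ => c i) t := by
      rintro (t | t) <;> simp [hN, hM, Matrix.updateRow_apply, Matrix.fromBlocks]
    have hz : ∀ t : ι, t ≠ i → N (Sum.inl i) (Sum.inl t) = 0 := by
      intro t ht
      rw [hNrow]
      exact Matrix.diagonal_apply_ne D fun h => ht h.symm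
    have hsum1 : ∑ t : ι, N (Sum.inl i) (Sum.inl t) *
        (N.updateRow (Sum.inl i) (Pi.single (Sum.inl t) 1)).det
        = N (Sum.inl i) (Sum.inl i) * (N.updateRow (Sum.inl i) (Pi.single (Sum.inl i) 1)).det := by
      refine Finset.sum_eq_single i (fun t _ ht => ?_) (by simp)
      rw [hz t ht, zero_mul]
    rw [hsum1]
    have hdet0 : (N.updateRow (Sum.inl i) (Pi.single (Sum.inl i) 1)).det = 0 := by
      apply Matrix.det_zero_of_row_eq (i := Sum.inl i) (j := Sum.inr ()) (by simp)
      ext t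
      simp [hN, Matrix.updateRow_apply]
    rw [hdet0, mul_zero, zero_add, Fintype.sum_unique]
    have hval : N (Sum.inl i) (Sum.inr ()) = c i := by rw [hNrow]; simp
    set P := N.updateRow (Sum.inl i) (Pi.single (Sum.inr ()) 1) with hP
    have hswap : (P.submatrix (Equiv.swap (Sum.inl i) (Sum.inr ())) id).det
        = (Equiv.Perm.sign (Equiv.swap (Sum.inl i : ι ⊕ Unit) (Sum.inr ())) : ℂ) * P.det :=
      Matrix.det_permute _ P
    have hR : P.submatrix (Equiv.swap (Sum.inl i) (Sum.inr ())) id =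
        Matrix.fromBlocks (Matrix.diagonal (Function.update D i 1))
          (Matrix.of fun k (_ : Unit) => Function.update c i 0 k)
          0 (Matrix.of fun (_ : Unit) (_ : Unit) => 1) := by
      ext (p | p) (q | q)
      · by_cases hp : p = i
        · subst hp
          by_cases hq : q = p <;>
            simp [hP, hN, hM, Matrix.updateRow_apply, Matrix.fromBlocks,
              Matrix.diagonal_apply, Pi.single_apply, Function.update_apply, hq,
              Equiv.swap_apply_left, eq_comm]
        · have hsw : ∀ t : ι, t ≠ i →
              Equiv.swap (Sum.inl i : ι ⊕ Unit) (Sum.inr ()) (Sum.inl t) = Sum.inl t :=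
            fun t ht => Equiv.swap_apply_of_ne_of_ne (by simpa using ht) (by simp)
          rcases eq_or_ne p q with rfl | hq
          · simp [hP, hN, hM, hsw p hp, Matrix.updateRow_apply, Matrix.fromBlocks,
              Matrix.diagonal_apply, Pi.single_apply, Function.update_apply, hp]
          · simp [hP, hN, hM, hsw p hp, Matrix.updateRow_apply, Matrix.fromBlocks,
              Matrix.diagonal_apply, Pi.single_apply, Function.update_apply, hp, hq]
      · by_cases hp : p = i
        · subst hp
          simp [hP, hN, hM, Matrix.updateRow_apply, Matrix.fromBlocks, Pi.single_apply,
            Function.update_apply, Equiv.swap_apply_left]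
        · have hsw : Equiv.swap (Sum.inl i : ι ⊕ Unit) (Sum.inr ()) (Sum.inl p) = Sum.inl p :=
            Equiv.swap_apply_of_ne_of_ne (by simpa using hp) (by simp)
          simp [hP, hN, hM, hsw, Matrix.updateRow_apply, Matrix.fromBlocks, Pi.single_apply,
            Function.update_apply, hp]
      · simp [hP, hN, hM, Matrix.updateRow_apply, Matrix.fromBlocks, Pi.single_apply,
          Equiv.swap_apply_right]
      · simp [hP, hN, hM, Matrix.updateRow_apply, Matrix.fromBlocks, Pi.single_apply,
          Equiv.swap_apply_right]
    have hdetR : (P.submatrix (Equiv.swap (Sum.inl i) (Sum.inr ())) id).det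
        = ∏ k ∈ Finset.univ.erase i, D k := by
      rw [hR, Matrix.det_fromBlocks_zero₂₁, Matrix.det_diagonal]
      rw [Finset.prod_update_of_mem (Finset.mem_univ i)]
      simp [Matrix.det_unique, Finset.sdiff_singleton_eq_erase]
    have hsign : ((Equiv.Perm.sign (Equiv.swap (Sum.inl i : ι ⊕ Unit) (Sum.inr ()))) : ℂ) = -1 := by
      rw [Equiv.Perm.sign_swap (by simp)]; simp
    rw [hdetR, hsign] at hswap
    rw [hval]
    linear_combination c i * hswap
  have hL : ∑ t : ι, M (Sum.inr ()) (Sum.inl t) *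
      (M.updateRow (Sum.inr ()) (Pi.single (Sum.inl t) 1)).det
      = -∑ t : ι, r t * c t * ∏ k ∈ Finset.univ.erase t, D k := by
    rw [← Finset.sum_neg_distrib]
    refine Finset.sum_congr rfl fun t _ => ?_
    rw [hrow, h1]
    simp only [Sum.elim_inl]
    ring
  have hU : ∑ u : Unit, M (Sum.inr ()) (Sum.inr u) *
      (M.updateRow (Sum.inr ()) (Pi.single (Sum.inr u) 1)).det = d * ∏ i, D i := by
    rw [Fintype.sum_unique]
    have : M (Sum.inr ()) (Sum.inr default) = d := by rw [hrow]; simp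
    rw [this, h2]
  rw [hL, hU]
  ring

def sumEquiv (n : ℕ) : ((Fin n ⊕ Fin n) ⊕ Unit) ≃ Fin (2 * n + 1) where
  toFun t := match t with
    | .inl (.inl j) => ⟨j, by omega⟩
    | .inl (.inr j) => ⟨n + j, by omega⟩
    | .inr _ => ⟨2 * n, by omega⟩
  invFun i :=
    if h : (i : ℕ) < n then .inl (.inl ⟨i, h⟩)
    else if h2 : (i : ℕ) < 2 * n then .inl (.inr ⟨(i : ℕ) - n, by omega⟩)
    else .inr ()
  left_inv t := by
    rcases t with (j | j) | u
    · simp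
    · have h1 : ¬ (n + (j : ℕ) < n) := by omega
      have h2 : n + (j : ℕ) < 2 * n := by omega
      simp [h1, h2]
    · have h1 : ¬ (2 * n < n) := by omega
      have h2 : ¬ (2 * n < 2 * n) := by omega
      simp [h1, h2]
  right_inv i := by
    by_cases h : (i : ℕ) < n
    · simp [h]
    · by_cases h2 : (i : ℕ) < 2 * n
      · simp only [h, h2, dif_neg, dif_pos, not_false_iff]
        ext; simp; omega
      · simp only [h, h2, dif_neg, not_false_iff]
        ext; simp; omega

lemma Bmat_reindex (n : ℕ) (ω a : Fin n → ℝ) (γ κ s : ℝ) (ν : ℂ) :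
    ((ν • (1 : Matrix (Fin (2 * n + 1)) (Fin (2 * n + 1)) ℂ)
        - Bmat n ω a γ κ s).submatrix (sumEquiv n) (sumEquiv n))
    = Matrix.fromBlocks
        (Matrix.diagonal (Sum.elim (fun j => ν - (ω j : ℂ)) (fun j => ν + (ω j : ℂ))))
        (Matrix.of fun i (_ : Unit) => -(Complex.I * γ * (Sum.elim a a i : ℝ)))
        (Matrix.of fun (_ : Unit) j => -(Complex.I * γ / 2 * (Sum.elim a a j : ℝ)))
        (Matrix.of fun (_ : Unit) (_ : Unit) => ν - Complex.I * κ * s) := by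
  ext p q
  rcases p with (i | i) | u <;> rcases q with (j | j) | v <;>
    simp only [Matrix.submatrix_apply, sumEquiv, Equiv.coe_fn_mk, Matrix.sub_apply,
      Matrix.smul_apply, Matrix.one_apply, Bmat, Matrix.of_apply, Matrix.fromBlocks,
      Matrix.diagonal_apply, Sum.elim_inl, Sum.elim_inr, smul_eq_mul]
  · -- inl inl, inl inl
    have hi : (i : ℕ) < n := i.isLt
    have hj : (j : ℕ) < n := j.isLt
    rw [dif_pos hi, dif_pos hj]
    by_cases hij : i = j
    · subst hij
      simp
    · have h1 : (⟨(i : ℕ), by omega⟩ : Fin (2*n+1)) ≠ ⟨(j : ℕ), by omega⟩ := by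
        simp [Fin.ext_iff]; exact fun h => hij (Fin.ext h)
      have h2 : ¬ ((i : ℕ) = (j : ℕ)) := fun h => hij (Fin.ext h)
      simp [h1, h2, Sum.inl.injEq, hij]
  · -- inl inl i, inl inr j
    have hi : (i : ℕ) < n := i.isLt
    have h1 : ¬ (n + (j : ℕ) < n) := by omega
    have h2 : n + (j : ℕ) < 2 * n := by omega
    have h3 : ¬ ((i : ℕ) = n + (j : ℕ)) := by omega
    rw [dif_pos hi, dif_neg h1, if_pos h2]
    simp [Fin.ext_iff, h3]
  · -- inl inl i, inr
    have hi : (i : ℕ) < n := i.isLt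
    have h1 : ¬ ((2 * n : ℕ) < n) := by omega
    have h2 : ¬ ((2 * n : ℕ) < 2 * n) := by omega
    have h3 : ¬ ((i : ℕ) = 2 * n) := by omega
    rw [dif_pos hi, dif_neg h1, if_neg h2]
    simp [Fin.ext_iff, h3]
  · -- inl inr i, inl inl j
    have h1 : ¬ (n + (i : ℕ) < n) := by omega
    have h2 : n + (i : ℕ) < 2 * n := by omega
    have hj : (j : ℕ) < n := j.isLt
    have h3 : ¬ (n + (i : ℕ) = (j : ℕ)) := by omega
    rw [dif_neg h1, dif_pos h2, dif_pos hj]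
    simp [Fin.ext_iff, h3]
  · -- inl inr i, inl inr j
    have h1 : ¬ (n + (i : ℕ) < n) := by omega
    have h2 : n + (i : ℕ) < 2 * n := by omega
    have h1' : ¬ (n + (j : ℕ) < n) := by omega
    have h2' : n + (j : ℕ) < 2 * n := by omega
    have h5 : n + (i : ℕ) - n = (i : ℕ) := by omega
    rw [dif_neg h1, dif_pos h2, dif_neg h1', dif_pos h2']
    by_cases hij : i = j
    · subst hij
      simp [Fin.ext_iff, h5]
    · have h3 : ¬ (n + (i : ℕ) = n + (j : ℕ)) := by
        intro h
        exact hij (Fin.ext (by omega))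
      simp [Fin.ext_iff, h3, hij, show ¬ ((i : ℕ) = (j : ℕ)) from fun h => hij (Fin.ext h)]
  · -- inl inr i, inr
    have h1 : ¬ (n + (i : ℕ) < n) := by omega
    have h2 : n + (i : ℕ) < 2 * n := by omega
    have h1' : ¬ ((2 * n : ℕ) < n) := by omega
    have h2' : ¬ ((2 * n : ℕ) < 2 * n) := by omega
    have h3 : ¬ (n + (i : ℕ) = 2 * n) := by omega
    have h5 : n + (i : ℕ) - n = (i : ℕ) := by omega
    rw [dif_neg h1, dif_pos h2, dif_neg h1', dif_neg h2']
    simp [Fin.ext_iff, h3, h5]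
  · -- inr, inl inl j
    have h1 : ¬ ((2 * n : ℕ) < n) := by omega
    have h2 : ¬ ((2 * n : ℕ) < 2 * n) := by omega
    have hj : (j : ℕ) < n := j.isLt
    have h3 : ¬ ((2 * n : ℕ) = (j : ℕ)) := by omega
    rw [dif_neg h1, dif_neg h2, dif_pos hj]
    simp [Fin.ext_iff, h3]
  · -- inr, inl inr j
    have h1 : ¬ ((2 * n : ℕ) < n) := by omega
    have h2 : ¬ ((2 * n : ℕ) < 2 * n) := by omega
    have h1' : ¬ (n + (j : ℕ) < n) := by omega
    have h2' : n + (j : ℕ) < 2 * n := by omega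
    have h3 : ¬ ((2 * n : ℕ) = n + (j : ℕ)) := by omega
    have h5 : n + (j : ℕ) - n = (j : ℕ) := by omega
    rw [dif_neg h1, dif_neg h2, dif_neg h1', dif_pos h2']
    simp [Fin.ext_iff, h3, h5]
  · -- inr, inr
    have h1 : ¬ ((2 * n : ℕ) < n) := by omega
    have h2 : ¬ ((2 * n : ℕ) < 2 * n) := by omega
    rw [dif_neg h1, dif_neg h2, dif_neg h1, dif_neg h2]
    simp [Fin.ext_iff]

section Helpers
variable {n : ℕ}

def DrFun (ω : Fin n → ℝ) (ν : ℝ) : (Fin n ⊕ Fin n) → ℝ :=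
  Sum.elim (fun j => ν - ω j) (fun j => ν + ω j)

def Pfun (ω : Fin n → ℝ) (ν : ℝ) : ℝ := ∏ t, DrFun ω ν t

def Sfun (ω a : Fin n → ℝ) (ν : ℝ) : ℝ :=
  ∑ t, (Sum.elim a a t) ^ 2 * ∏ k ∈ Finset.univ.erase t, DrFun ω ν k

lemma detB (ω a : Fin n → ℝ) (γ κ s : ℝ) (ν : ℝ) :
    Matrix.det (((ν : ℝ) : ℂ) • (1 : Matrix (Fin (2 * n + 1)) (Fin (2 * n + 1)) ℂ)
        - Bmat n ω a γ κ s)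
    = ((ν * Pfun ω ν + γ ^ 2 / 2 * Sfun ω a ν : ℝ) : ℂ)
      - ((κ * s * Pfun ω ν : ℝ) : ℂ) * Complex.I := by
  rw [← Matrix.det_submatrix_equiv_self (sumEquiv n), Bmat_reindex, det_bordered]
  have hD : ∀ t, (Sum.elim (fun j => ((ν : ℂ)) - (ω j : ℂ)) (fun j => ((ν : ℂ)) + (ω j : ℂ))) t
      = ((DrFun ω ν t : ℝ) : ℂ) := by
    rintro (t | t) <;> simp [DrFun]
  have hP : ∏ t, (Sum.elim (fun j => ((ν : ℂ)) - (ω j : ℂ)) (fun j => ((ν : ℂ)) + (ω j : ℂ))) t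
      = ((Pfun ω ν : ℝ) : ℂ) := by
    rw [Finset.prod_congr rfl fun t _ => hD t, Pfun]
    push_cast
    rfl
  have hQ : ∀ t : Fin n ⊕ Fin n, ∏ k ∈ Finset.univ.erase t,
      (Sum.elim (fun j => ((ν : ℂ)) - (ω j : ℂ)) (fun j => ((ν : ℂ)) + (ω j : ℂ))) k
      = ((∏ k ∈ Finset.univ.erase t, DrFun ω ν k : ℝ) : ℂ) := by
    intro t
    rw [Finset.prod_congr rfl fun k _ => hD k]
    push_cast
    rfl
  have hterm : ∀ t : Fin n ⊕ Fin n,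
      (-(Complex.I * γ / 2 * ((Sum.elim a a t : ℝ) : ℂ)))
        * (-(Complex.I * γ * ((Sum.elim a a t : ℝ) : ℂ)))
        * ∏ k ∈ Finset.univ.erase t,
            (Sum.elim (fun j => ((ν : ℂ)) - (ω j : ℂ)) (fun j => ((ν : ℂ)) + (ω j : ℂ))) k
      = -(((γ ^ 2 / 2 * (Sum.elim a a t) ^ 2
            * ∏ k ∈ Finset.univ.erase t, DrFun ω ν k : ℝ)) : ℂ) := by
    intro t
    rw [hQ t]
    push_cast
    linear_combination (((γ : ℂ)) ^ 2 / 2 * ((Sum.elim a a t : ℝ) : ℂ) ^ 2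
      * ∏ k ∈ Finset.univ.erase t, ((DrFun ω ν k : ℝ) : ℂ)) * Complex.I_sq
  have hSum : ∑ t : Fin n ⊕ Fin n,
      (-(Complex.I * γ / 2 * ((Sum.elim a a t : ℝ) : ℂ)))
        * (-(Complex.I * γ * ((Sum.elim a a t : ℝ) : ℂ)))
        * ∏ k ∈ Finset.univ.erase t,
            (Sum.elim (fun j => ((ν : ℂ)) - (ω j : ℂ)) (fun j => ((ν : ℂ)) + (ω j : ℂ))) k
      = -(((γ ^ 2 / 2 * Sfun ω a ν : ℝ)) : ℂ) := by
    rw [Finset.sum_congr rfl fun t _ => hterm t]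
    rw [Sfun]
    push_cast
    rw [Finset.mul_sum, ← Finset.sum_neg_distrib]
    exact Finset.sum_congr rfl fun t _ => by ring
  rw [hP, hSum]
  push_cast
  ring
end Helpers

lemma Sfun_vanish {n : ℕ} (ω a : Fin n → ℝ) (ν : ℝ) (t0 : Fin n ⊕ Fin n)
    (h0 : DrFun ω ν t0 = 0) :
    Sfun ω a ν = (Sum.elim a a t0) ^ 2 * ∏ k ∈ Finset.univ.erase t0, DrFun ω ν k := by
  rw [Sfun]
  refine Finset.sum_eq_single t0 (fun t _ ht => ?_) (by simp)
  have hmem : t0 ∈ Finset.univ.erase t :=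
    Finset.mem_erase.mpr ⟨fun h => ht h.symm, Finset.mem_univ _⟩
  rw [Finset.prod_eq_zero hmem h0, mul_zero]


/-- for distinct positive eigenvalues κ_j = ω_j², ξ ≠ 0 (i.e. s = |ξ|² > 0),
κ > 0, γ ≠ 0, the matrix B(ξ) has a purely real eigenvalue iff some coupling function
vanishes; if a_j = 0 then ±ω_j are eigenvalues of B(ξ). -/
theorem real_eigenvalue_iff_hyperbolic (n : ℕ) (ω a : Fin n → ℝ) (γ κ s : ℝ)
    (hω : ∀ j, 0 < ω j) (hinj : Function.Injective ω)
    (hs : 0 < s) (hκ : 0 < κ) (hγ : γ ≠ 0) :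
    ((∃ ν : ℝ,
        Matrix.det ((ν : ℂ) • (1 : Matrix (Fin (2 * n + 1)) (Fin (2 * n + 1)) ℂ)
          - Bmat n ω a γ κ s) = 0) ↔ ∃ j, a j = 0)
    ∧ ∀ j, a j = 0 →
        (Matrix.det (((ω j : ℝ) : ℂ) • (1 : Matrix (Fin (2 * n + 1)) (Fin (2 * n + 1)) ℂ)
            - Bmat n ω a γ κ s) = 0
          ∧ Matrix.det ((-(ω j : ℝ) : ℂ) • (1 : Matrix (Fin (2 * n + 1)) (Fin (2 * n + 1)) ℂ)
            - Bmat n ω a γ κ s) = 0) := by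
  have key : ∀ ν : ℝ,
      Matrix.det (((ν : ℝ) : ℂ) • (1 : Matrix (Fin (2 * n + 1)) (Fin (2 * n + 1)) ℂ)
          - Bmat n ω a γ κ s) = 0
      ↔ (ν * Pfun ω ν + γ ^ 2 / 2 * Sfun ω a ν = 0 ∧ κ * s * Pfun ω ν = 0) := by
    intro ν
    have h' : ∀ X Y : ℝ, (X : ℂ) - (Y : ℂ) * Complex.I = 0 ↔ X = 0 ∧ Y = 0 := by
      intro X Y
      rw [Complex.ext_iff]
      simp
    rw [detB]
    exact h' _ _
  have part2 : ∀ j, a j = 0 →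
      (Matrix.det (((ω j : ℝ) : ℂ) • (1 : Matrix (Fin (2 * n + 1)) (Fin (2 * n + 1)) ℂ)
          - Bmat n ω a γ κ s) = 0
        ∧ Matrix.det ((-(ω j : ℝ) : ℂ) • (1 : Matrix (Fin (2 * n + 1)) (Fin (2 * n + 1)) ℂ)
          - Bmat n ω a γ κ s) = 0) := by
    intro j hj
    constructor
    · rw [key (ω j)]
      have h0 : DrFun ω (ω j) (Sum.inl j) = 0 := by simp [DrFun]
      have hP0 : Pfun ω (ω j) = 0 := Finset.prod_eq_zero (Finset.mem_univ _) h0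
      have hS0 : Sfun ω a (ω j) = 0 := by
        rw [Sfun_vanish ω a _ _ h0]
        simp [hj]
      rw [hP0, hS0]
      norm_num
    · rw [show (-(ω j : ℝ) : ℂ) = ((-(ω j) : ℝ) : ℂ) by push_cast; ring, key (-(ω j))]
      have h0 : DrFun ω (-(ω j)) (Sum.inr j) = 0 := by simp [DrFun]
      have hP0 : Pfun ω (-(ω j)) = 0 := Finset.prod_eq_zero (Finset.mem_univ _) h0
      have hS0 : Sfun ω a (-(ω j)) = 0 := by
        rw [Sfun_vanish ω a _ _ h0]
        simp [hj]
      rw [hP0, hS0]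
      norm_num
  refine ⟨⟨?_, fun ⟨j, hj⟩ => ⟨ω j, (part2 j hj).1⟩⟩, part2⟩
  rintro ⟨ν, hdet⟩
  rw [key ν] at hdet
  obtain ⟨hX, hY⟩ := hdet
  have hP0 : Pfun ω ν = 0 := by
    have := mul_eq_zero.mp hY
    rcases this with h | h
    · exact absurd h (by positivity)
    · exact h
  obtain ⟨t0, -, h0⟩ := Finset.prod_eq_zero_iff.mp hP0
  have hS0 : Sfun ω a ν = 0 := by
    rw [hP0, mul_zero, zero_add] at hX
    have : (γ ^ 2 / 2) ≠ 0 := by positivity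
    exact (mul_eq_zero.mp hX).resolve_left this
  rw [Sfun_vanish ω a ν t0 h0] at hS0
  have hQne : ∏ k ∈ Finset.univ.erase t0, DrFun ω ν k ≠ 0 := by
    rw [Finset.prod_ne_zero_iff]
    intro k hk
    have hkt : k ≠ t0 := Finset.ne_of_mem_erase hk
    rcases t0 with j | j
    · have hν : ν = ω j := by simpa [DrFun, sub_eq_zero] using h0
      rcases k with k | k
      · have hkj : k ≠ j := fun h => hkt (by rw [h])
        have : ω j ≠ ω k := fun h => hkj (hinj h.symm)
        simp only [DrFun, Sum.elim_inl]
        rw [hν]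
        exact sub_ne_zero.mpr this
      · have : 0 < ω j + ω k := by have := hω j; have := hω k; linarith
        simp [DrFun, hν]
        linarith
    · have hν : ν = -(ω j) := by
        have : ν + ω j = 0 := by simpa [DrFun] using h0
        linarith
      rcases k with k | k
      · have : ν - ω k ≠ 0 := by have := hω j; have := hω k; rw [hν]; intro h; linarith [sub_eq_zero.mp h]
        simpa [DrFun] using this
      · have hkj : k ≠ j := fun h => hkt (by rw [h])
        have : ω j ≠ ω k := fun h => hkj (hinj h.symm)
        have : ν + ω k ≠ 0 := by rw [hν]; intro h; exact this (by linarith)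
        simpa [DrFun] using this
  have haa : Sum.elim a a t0 = 0 := by
    have := mul_eq_zero.mp hS0
    rcases this with h | h
    · exact pow_eq_zero_iff (by norm_num) |>.mp h
    · exact absurd h hQne
  rcases t0 with j | j
  · exact ⟨j, by simpa using haa⟩
  · exact ⟨j, by simpa using haa⟩
end

section
/- For the 3×3 cubic elasticity symbol A(η) with parameters μ > 0, τ > 0, the matrix A(η) is positive definite for all unit vectors η ∈ S² if and only if −2μ − τ/2 < λ < τ. -/
open Matrix BigOperators

/-- The cubic-media elastic symbol A(η) in 3D: diagonal (τ−μ)η_i² + μ,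
off-diagonal (λ+μ)η_iη_j. -/
def Acub (τ lam μ : ℝ) (η : Fin 3 → ℝ) : Matrix (Fin 3) (Fin 3) ℝ :=
  Matrix.of fun i j =>
    if i = j then (τ - μ) * η i ^ 2 + μ else (lam + μ) * η i * η j

private lemma argB (τ μ lam s2 p n σ : ℝ) (hτ : 0 < τ) (hμ : 0 < μ)
    (h1 : -(2*μ) - τ/2 < lam) (ha : lam + μ < 0)
    (hs2 : s2 ≤ p + 2*σ) (hc : p + 2*σ ≤ n) (hσp : σ ≤ p) (hσ0 : 0 ≤ σ)
    (hp0 : 0 ≤ p) (hs0 : 0 ≤ s2) (hn : 0 < n) :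
    0 < (lam + μ) * s2 + (τ - lam - 2*μ) * p + μ * n := by
  have has : (lam + μ) * (p + 2*σ) ≤ (lam + μ) * s2 :=
    mul_le_mul_of_nonpos_left hs2 ha.le
  rcases hp0.eq_or_lt with hpz | hpz
  · have hσz : σ = 0 := le_antisymm (by linarith) hσ0
    have hsz : s2 = 0 := le_antisymm (by rw [hσz, ← hpz] at hs2; linarith) hs0
    rw [hsz, ← hpz]
    have := mul_pos hμ hn
    linarith
  · rcases le_or_gt 0 (lam + 2*μ) with hcc | hcc
    · have k1 : 0 ≤ (lam + 2*μ) * σ := mul_nonneg hcc hσ0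
      have k2 : 0 ≤ μ * (n - p - 2*σ) := mul_nonneg hμ.le (by linarith)
      have k3 : 0 < τ * p := mul_pos hτ hpz
      nlinarith [has, k1, k2, k3]
    · have k1 : (lam + 2*μ) * p ≤ (lam + 2*μ) * σ := mul_le_mul_of_nonpos_left hσp hcc.le
      have k2 : 0 ≤ μ * (n - p - 2*σ) := mul_nonneg hμ.le (by linarith)
      have k3 : 0 < (τ + 2*lam + 4*μ) * p := mul_pos (by linarith) hpz
      nlinarith [has, k1, k2, k3]

private lemma argA (τ μ lam s2 p n : ℝ) (hτ : 0 < τ) (hμ : 0 < μ)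
    (h2 : lam < τ) (hb : τ - lam - 2*μ < 0)
    (hI6 : 2*p ≤ n + s2) (hsn : s2 ≤ n) (hs0 : 0 ≤ s2) (hn : 0 < n) :
    0 < (lam + μ) * s2 + (τ - lam - 2*μ) * p + μ * n := by
  have hbp : (τ - lam - 2*μ) * ((n + s2)/2) ≤ (τ - lam - 2*μ) * p :=
    mul_le_mul_of_nonpos_left (by linarith) hb.le
  rcases le_or_gt 0 (lam + τ) with hd | hd
  · have k1 : 0 ≤ (lam + τ) * s2 := mul_nonneg hd hs0
    have k2 : 0 < (τ - lam) * n := mul_pos (by linarith) hn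
    nlinarith [hbp, k1, k2]
  · have k1 : (lam + τ) * n ≤ (lam + τ) * s2 := mul_le_mul_of_nonpos_left hsn hd.le
    have k2 : 0 < τ * n := mul_pos hτ hn
    nlinarith [hbp, k1, k2]

lemma key (τ μ lam η0 η1 η2 x0 x1 x2 : ℝ) (hτ : 0 < τ) (hμ : 0 < μ)
    (h1 : -(2*μ) - τ/2 < lam) (h2 : lam < τ)
    (hη : η0^2 + η1^2 + η2^2 = 1) (hn : 0 < x0^2 + x1^2 + x2^2) :
    0 < (lam + μ) * (η0*x0 + η1*x1 + η2*x2) ^ 2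
      + (τ - lam - 2*μ) * (η0^2*x0^2 + η1^2*x1^2 + η2^2*x2^2)
      + μ * (x0^2 + x1^2 + x2^2) := by
  have hmul : x0^2 + x1^2 + x2^2
      = (η0^2 + η1^2 + η2^2) * (x0^2 + x1^2 + x2^2) := by rw [hη]; ring
  rcases le_or_gt 0 (τ - lam - 2*μ) with hb | hb
  · rcases le_or_gt 0 (lam + μ) with ha | ha
    · have k1 := mul_nonneg ha (sq_nonneg (η0*x0 + η1*x1 + η2*x2))
      have k2 := mul_nonneg hb
        (show (0:ℝ) ≤ η0^2*x0^2 + η1^2*x1^2 + η2^2*x2^2 by positivity)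
      have k3 := mul_pos hμ hn
      linarith
    · obtain ⟨a0, ha0⟩ : ∃ w : ℝ, w = |η0| := ⟨_, rfl⟩
      obtain ⟨a1, ha1⟩ : ∃ w : ℝ, w = |η1| := ⟨_, rfl⟩
      obtain ⟨a2, ha2⟩ : ∃ w : ℝ, w = |η2| := ⟨_, rfl⟩
      obtain ⟨b0, hb0⟩ : ∃ w : ℝ, w = |x0| := ⟨_, rfl⟩
      obtain ⟨b1, hb1⟩ : ∃ w : ℝ, w = |x1| := ⟨_, rfl⟩
      obtain ⟨b2, hb2⟩ : ∃ w : ℝ, w = |x2| := ⟨_, rfl⟩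
      have m0 : a0^2 * b0^2 = η0^2 * x0^2 := by rw [ha0, hb0, sq_abs, sq_abs]
      have m1 : a1^2 * b1^2 = η1^2 * x1^2 := by rw [ha1, hb1, sq_abs, sq_abs]
      have m2 : a2^2 * b2^2 = η2^2 * x2^2 := by rw [ha2, hb2, sq_abs, sq_abs]
      have na0 : 0 ≤ a0 := ha0 ▸ abs_nonneg _
      have na1 : 0 ≤ a1 := ha1 ▸ abs_nonneg _
      have na2 : 0 ≤ a2 := ha2 ▸ abs_nonneg _
      have nb0 : 0 ≤ b0 := hb0 ▸ abs_nonneg _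
      have nb1 : 0 ≤ b1 := hb1 ▸ abs_nonneg _
      have nb2 : 0 ≤ b2 := hb2 ▸ abs_nonneg _
      have hu0 : η0 * x0 ≤ a0 * b0 := by
        rw [ha0, hb0, ← abs_mul]; exact le_abs_self _
      have hu1 : η1 * x1 ≤ a1 * b1 := by
        rw [ha1, hb1, ← abs_mul]; exact le_abs_self _
      have hu2 : η2 * x2 ≤ a2 * b2 := by
        rw [ha2, hb2, ← abs_mul]; exact le_abs_self _
      have hl0 : -(a0 * b0) ≤ η0 * x0 := by
        rw [ha0, hb0, ← abs_mul]; exact neg_abs_le _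
      have hl1 : -(a1 * b1) ≤ η1 * x1 := by
        rw [ha1, hb1, ← abs_mul]; exact neg_abs_le _
      have hl2 : -(a2 * b2) ≤ η2 * x2 := by
        rw [ha2, hb2, ← abs_mul]; exact neg_abs_le _
      have hηa : a0^2 + a1^2 + a2^2 = 1 := by
        rw [ha0, ha1, ha2, sq_abs, sq_abs, sq_abs]; exact hη
      -- s^2 ≤ p + 2σ
      have hs2 : (η0*x0 + η1*x1 + η2*x2)^2
          ≤ (η0^2*x0^2 + η1^2*x1^2 + η2^2*x2^2)
            + 2*(a0*b0*(a1*b1) + a0*b0*(a2*b2) + a1*b1*(a2*b2)) := by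
        have h' : (η0*x0 + η1*x1 + η2*x2)^2 ≤ (a0*b0 + a1*b1 + a2*b2)^2 :=
          sq_le_sq' (by linarith) (by linarith)
        have e2 : (a0*b0 + a1*b1 + a2*b2)^2
            = a0^2*b0^2 + a1^2*b1^2 + a2^2*b2^2
              + 2*(a0*b0*(a1*b1) + a0*b0*(a2*b2) + a1*b1*(a2*b2)) := by ring
        linarith [h', e2, m0, m1, m2]
      -- Cauchy–Schwarz
      have hcauchy : (η0^2*x0^2 + η1^2*x1^2 + η2^2*x2^2)
            + 2*(a0*b0*(a1*b1) + a0*b0*(a2*b2) + a1*b1*(a2*b2))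
          ≤ x0^2 + x1^2 + x2^2 := by
        have e3 : (a0^2 + a1^2 + a2^2) * (b0^2 + b1^2 + b2^2)
            - (a0^2*b0^2 + a1^2*b1^2 + a2^2*b2^2)
            - 2*(a0*b0*(a1*b1) + a0*b0*(a2*b2) + a1*b1*(a2*b2))
            = (a0*b1 - a1*b0)^2 + (a0*b2 - a2*b0)^2 + (a1*b2 - a2*b1)^2 := by ring
        have e4 : b0^2 + b1^2 + b2^2 = x0^2 + x1^2 + x2^2 := by
          rw [hb0, hb1, hb2, sq_abs, sq_abs, sq_abs]
        have e5 : (a0^2 + a1^2 + a2^2) * (b0^2 + b1^2 + b2^2)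
            = x0^2 + x1^2 + x2^2 := by rw [hηa, e4]; ring
        linarith [e3, e5, m0, m1, m2, sq_nonneg (a0*b1 - a1*b0),
          sq_nonneg (a0*b2 - a2*b0), sq_nonneg (a1*b2 - a2*b1)]
      -- σ ≤ p
      have hσp : a0*b0*(a1*b1) + a0*b0*(a2*b2) + a1*b1*(a2*b2)
          ≤ η0^2*x0^2 + η1^2*x1^2 + η2^2*x2^2 := by
        have e6 : 2*((a0^2*b0^2 + a1^2*b1^2 + a2^2*b2^2)
              - (a0*b0*(a1*b1) + a0*b0*(a2*b2) + a1*b1*(a2*b2)))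
            = (a0*b0 - a1*b1)^2 + (a0*b0 - a2*b2)^2 + (a1*b1 - a2*b2)^2 := by ring
        linarith [e6, m0, m1, m2, sq_nonneg (a0*b0 - a1*b1),
          sq_nonneg (a0*b0 - a2*b2), sq_nonneg (a1*b1 - a2*b2)]
      have hσ0 : 0 ≤ a0*b0*(a1*b1) + a0*b0*(a2*b2) + a1*b1*(a2*b2) := by positivity
      exact argB τ μ lam _ _ _ _ hτ hμ h1 ha hs2 hcauchy hσp hσ0 (by positivity) (sq_nonneg _) hn
  · -- argument A
    have hI6 : 2*(η0^2*x0^2 + η1^2*x1^2 + η2^2*x2^2)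
        ≤ (x0^2 + x1^2 + x2^2) + (η0*x0 + η1*x1 + η2*x2)^2 := by
      have e7 : (η0^2 + η1^2 + η2^2) * (x0^2 + x1^2 + x2^2)
            + (η0*x0 + η1*x1 + η2*x2)^2
            - 2*(η0^2*x0^2 + η1^2*x1^2 + η2^2*x2^2)
          = (η0*x1 + η1*x0)^2 + (η0*x2 + η2*x0)^2 + (η1*x2 + η2*x1)^2 := by ring
      linarith [e7, hmul, sq_nonneg (η0*x1 + η1*x0), sq_nonneg (η0*x2 + η2*x0),
        sq_nonneg (η1*x2 + η2*x1)]
    have hsn : (η0*x0 + η1*x1 + η2*x2)^2 ≤ x0^2 + x1^2 + x2^2 := by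
      have e8 : (η0^2 + η1^2 + η2^2) * (x0^2 + x1^2 + x2^2)
            - (η0*x0 + η1*x1 + η2*x2)^2
          = (η0*x1 - η1*x0)^2 + (η0*x2 - η2*x0)^2 + (η1*x2 - η2*x1)^2 := by ring
      linarith [e8, hmul, sq_nonneg (η0*x1 - η1*x0), sq_nonneg (η0*x2 - η2*x0),
        sq_nonneg (η1*x2 - η2*x1)]
    exact argA τ μ lam _ _ _ hτ hμ h2 hb hI6 hsn (sq_nonneg _) hn

/-- for μ, τ > 0, the symbol A(η) is positive definite for all unit η
iff −2μ − τ/2 < λ < τ. -/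
theorem cubic_posdef_iff (τ μ lam : ℝ) (hτ : 0 < τ) (hμ : 0 < μ) :
    (∀ η : Fin 3 → ℝ, ∑ i, η i ^ 2 = 1 → (Acub τ lam μ η).PosDef)
      ↔ (-(2 * μ) - τ / 2 < lam ∧ lam < τ) := by
  constructor
  · intro h
    constructor
    · -- use η = (c,c,c), x = (1,1,1)
      have hc : (Real.sqrt (1/3))^2 = 1/3 := Real.sq_sqrt (by norm_num)
      set c := Real.sqrt (1/3) with hcdef
      have hpd := h ![c, c, c] (by simp [Fin.sum_univ_three, hc]; norm_num)
      have h2 := (posDef_iff_dotProduct_mulVec.mp hpd).2 (x := ![1, 1, 1]) (by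
        intro hcon; have := congrFun hcon 0; norm_num at this)
      simp [Acub, Matrix.mulVec, dotProduct, Fin.sum_univ_three] at h2
      nlinarith [h2, hc]
    · have ha : (Real.sqrt (1/2))^2 = 1/2 := Real.sq_sqrt (by norm_num)
      set a := Real.sqrt (1/2) with hadef
      have hpd := h ![a, a, 0] (by simp [Fin.sum_univ_three, ha]; norm_num)
      have h2 := (posDef_iff_dotProduct_mulVec.mp hpd).2 (x := ![1, -1, 0]) (by
        intro hcon; have := congrFun hcon 0; norm_num at this)
      simp [Acub, Matrix.mulVec, dotProduct, Fin.sum_univ_three] at h2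
      nlinarith [h2, ha]
  · rintro ⟨h1, h2⟩ η hη
    rw [posDef_iff_dotProduct_mulVec]
    constructor
    · ext i j
      fin_cases i <;> fin_cases j <;>
        simp [Acub, Matrix.conjTranspose_apply] <;> ring
    · intro x hx
      have hη3 : (η 0)^2 + (η 1)^2 + (η 2)^2 = 1 := by
        rw [Fin.sum_univ_three] at hη; exact hη
      have hn : 0 < (x 0)^2 + (x 1)^2 + (x 2)^2 := by
        rcases lt_or_eq_of_le (by positivity : (0:ℝ) ≤ (x 0)^2 + (x 1)^2 + (x 2)^2) with h' | h'
        · exact h'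
        · exfalso
          apply hx
          have q0 : x 0 ^ 2 = 0 := le_antisymm (by nlinarith [sq_nonneg (x 1), sq_nonneg (x 2)]) (sq_nonneg _)
          have q1 : x 1 ^ 2 = 0 := le_antisymm (by nlinarith [sq_nonneg (x 0), sq_nonneg (x 2)]) (sq_nonneg _)
          have q2 : x 2 ^ 2 = 0 := le_antisymm (by nlinarith [sq_nonneg (x 0), sq_nonneg (x 1)]) (sq_nonneg _)
          have e0 : x 0 = 0 := sq_eq_zero_iff.mp q0
          have e1 : x 1 = 0 := sq_eq_zero_iff.mp q1
          have e2 : x 2 = 0 := sq_eq_zero_iff.mp q2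
          funext i
          fin_cases i <;> simp [e0, e1, e2]
      have hq : dotProduct (star x) ((Acub τ lam μ η) *ᵥ x) =
          (lam + μ) * (η 0 * x 0 + η 1 * x 1 + η 2 * x 2) ^ 2
          + (τ - lam - 2*μ) * ((η 0)^2*(x 0)^2 + (η 1)^2*(x 1)^2 + (η 2)^2*(x 2)^2)
          + μ * ((x 0)^2 + (x 1)^2 + (x 2)^2) := by
        simp [Acub, Matrix.mulVec, dotProduct, Fin.sum_univ_three]
        ring
      rw [hq]
      exact key τ μ lam (η 0) (η 1) (η 2) (x 0) (x 1) (x 2) hτ hμ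
        (by linarith) h2 hη3 hn
end

section
/- For cubic media in 3D, a unit vector η ∈ S² is elastically degenerate (i.e. A(η) has fewer than 3 distinct eigenvalues) if η₁² = η₂² = η₃² = 1/3 or if η_i² = 1 for some i, provided τ ≠ λ + 2μ and λ + μ ≠ 0. In the first case the eigenspaces are span{η} and η^⊥; in the second case (say η = e₁) the eigenvalues are τ (eigenvector e₁) and μ with multiplicity two (eigenspace e₁^⊥). -/
open Matrix BigOperators

/-- Key structural identity on the symmetric directions. -/
lemma Acub_key (τ lam μ : ℝ) (η x : Fin 3 → ℝ) (h : ∀ i, η i ^ 2 = 1 / 3) :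
    (Acub τ lam μ η).mulVec x
      = ((τ + μ - lam) / 3) • x + ((lam + μ) * (η ⬝ᵥ x)) • η := by
  funext i
  fin_cases i <;>
    simp [Acub, Matrix.mulVec, dotProduct, Fin.sum_univ_three, Fin.isValue] <;>
    [linear_combination ((τ - lam - 2 * μ) * x 0) * h 0;
     linear_combination ((τ - lam - 2 * μ) * x 1) * h 1;
     linear_combination ((τ - lam - 2 * μ) * x 2) * h 2]

lemma Acub_e1 (τ lam μ : ℝ) (x : Fin 3 → ℝ) :
    (Acub τ lam μ ![1, 0, 0]).mulVec x = ![τ * x 0, μ * x 1, μ * x 2] := by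
  funext i
  fin_cases i <;>
    simp [Acub, Matrix.mulVec, dotProduct, Fin.sum_univ_three, Fin.isValue] <;> ring

/-- for cubic media (τ ≠ λ+2μ, λ+μ ≠ 0) the directions with
η₁² = η₂² = η₃² = 1/3 and the directions e_i are elastically degenerate: in the first
case the eigenspaces are span{η} (eigenvalue (τ+2λ+4μ)/3) and η^⊥ (eigenvalue
(τ+μ−λ)/3); for η = e₁ the eigenvalues are τ (eigenvector e₁) and μ on e₁^⊥; in both
cases these are the only eigenvalues, so A(η) has fewer than 3 distinct eigenvalues. -/
theorem cubic_degenerate_directions (τ lam μ : ℝ)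
    (hiso : τ ≠ lam + 2 * μ) (hlm : lam + μ ≠ 0) :
    (∀ η : Fin 3 → ℝ, (∀ i, η i ^ 2 = 1 / 3) →
      (Acub τ lam μ η).mulVec η = ((τ + 2 * lam + 4 * μ) / 3) • η
      ∧ (∀ x : Fin 3 → ℝ, η ⬝ᵥ x = 0 →
          (Acub τ lam μ η).mulVec x = ((τ + μ - lam) / 3) • x)
      ∧ (∀ c : ℝ, (∃ x : Fin 3 → ℝ, x ≠ 0 ∧ (Acub τ lam μ η).mulVec x = c • x)
          → c = (τ + 2 * lam + 4 * μ) / 3 ∨ c = (τ + μ - lam) / 3))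
    ∧ ((Acub τ lam μ ![1, 0, 0]).mulVec ![1, 0, 0] = τ • ![(1 : ℝ), 0, 0]
      ∧ (∀ x : Fin 3 → ℝ, ![(1 : ℝ), 0, 0] ⬝ᵥ x = 0 →
          (Acub τ lam μ ![1, 0, 0]).mulVec x = μ • x)
      ∧ (∀ c : ℝ, (∃ x : Fin 3 → ℝ, x ≠ 0 ∧ (Acub τ lam μ ![1, 0, 0]).mulVec x = c • x)
          → c = τ ∨ c = μ)) := by
  constructor
  · intro η h
    have hnorm : η ⬝ᵥ η = 1 := by
      simp [dotProduct, Fin.sum_univ_three]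
      have h0 := h 0; have h1 := h 1; have h2 := h 2
      nlinarith [h0, h1, h2]
    refine ⟨?_, ?_, ?_⟩
    · rw [Acub_key τ lam μ η η h, hnorm]
      funext i
      simp [Pi.add_apply, Pi.smul_apply, smul_eq_mul]
      ring
    · intro x hx
      rw [Acub_key τ lam μ η x h, hx]
      simp
    · rintro c ⟨x, hx0, hx⟩
      rw [Acub_key τ lam μ η x h] at hx
      set d := η ⬝ᵥ x with hd
      -- dot the equation with η
      have hdot : η ⬝ᵥ ((((τ + μ - lam) / 3) • x) + ((lam + μ) * d) • η) = η ⬝ᵥ (c • x) := by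
        rw [hx]
      have hdot' : (τ + μ - lam) / 3 * d + (lam + μ) * d = c * d := by
        simpa [dotProduct_add, dotProduct_smul, hnorm, smul_eq_mul, ← hd,
          mul_comm, mul_assoc] using hdot
      by_cases hdz : d = 0
      · right
        rw [hdz, mul_zero, zero_smul, add_zero] at hx
        obtain ⟨i, hi⟩ := Function.ne_iff.mp hx0
        have hxi := congrFun hx i
        simp only [Pi.smul_apply, smul_eq_mul] at hxi
        exact (mul_right_cancel₀ hi hxi).symm
      · left
        have : d * ((τ + μ - lam) / 3 + (lam + μ) - c) = 0 := by ring_nf; linarith [hdot']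
        have h2 : (τ + μ - lam) / 3 + (lam + μ) - c = 0 := by
          rcases mul_eq_zero.mp this with h | h
          · exact absurd h hdz
          · exact h
        linarith [h2]
  · refine ⟨?_, ?_, ?_⟩
    · rw [Acub_e1]
      funext i; fin_cases i <;> simp
    · intro x hx
      have hx0 : x 0 = 0 := by
        simpa [dotProduct, Fin.sum_univ_three] using hx
      rw [Acub_e1]
      funext i; fin_cases i <;> simp [hx0]
    · rintro c ⟨x, hx0, hx⟩
      rw [Acub_e1] at hx
      have e0 : τ * x 0 = c * x 0 := by
        have := congrFun hx 0; simpa using this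
      have e1 : μ * x 1 = c * x 1 := by
        have := congrFun hx 1; simpa using this
      have e2 : μ * x 2 = c * x 2 := by
        have := congrFun hx 2; simpa using this
      obtain ⟨i, hi⟩ := Function.ne_iff.mp hx0
      fin_cases i
      · left
        exact (mul_right_cancel₀ hi e0).symm
      · right; exact (mul_right_cancel₀ hi e1).symm
      · right; exact (mul_right_cancel₀ hi e2).symm
end
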